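/- Conversely, if B and C are commuting real symmetric n×n matrices and every eigenvalue of the block matrix [[0, I], [B, C]] has strictly negative real part, then all eigenvalues of B and of C are strictly negative. -/

import Mathlib

open Matrix

-- eigenvector implies spectrum membership
lemma spec_of_eigvec {m : Type*} [Fintype m] [DecidableEq m]
    (M : Matrix m m ℂ) (s : ℂ) (v : m → ℂ) (hv : v ≠ 0)
    (h : M.mulVec v = s • v) : s ∈ spectrum ℂ M := by
  rw [spectrum.mem_iff]
  intro hu
  rw [Matrix.isUnit_iff_isUnit_det, isUnit_iff_ne_zero] at hu
  apply hu
  rw [← Matrix.exists_mulVec_eq_zero_iff]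
  refine ⟨v, hv, ?_⟩
  rw [Matrix.sub_mulVec, h, Algebra.algebraMap_eq_smul_one, Matrix.smul_mulVec,
    Matrix.one_mulVec, sub_self]

-- spectrum membership over ℝ gives complex eigenvector
lemma eigvec_of_spec {m : Type*} [Fintype m] [DecidableEq m]
    (A : Matrix m m ℝ) (a : ℝ) (ha : a ∈ spectrum ℝ A) :
    ∃ v : m → ℂ, v ≠ 0 ∧ (A.map Complex.ofReal).mulVec v = (a : ℂ) • v := by
  rw [spectrum.mem_iff] at ha
  have hdet : (algebraMap ℝ (Matrix m m ℝ) a - A).det = 0 := by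
    by_contra hd
    exact ha ((Matrix.isUnit_iff_isUnit_det _).mpr (isUnit_iff_ne_zero.mpr hd))
  have hmap : (algebraMap ℝ (Matrix m m ℝ) a - A).map Complex.ofReal
      = algebraMap ℂ (Matrix m m ℂ) (a : ℂ) - A.map Complex.ofReal := by
    ext i j
    simp [Matrix.algebraMap_matrix_apply, Matrix.map_apply, apply_ite]
  have hdetC : (algebraMap ℂ (Matrix m m ℂ) (a : ℂ) - A.map Complex.ofReal).det = 0 := by
    have := RingHom.map_det Complex.ofRealHom (algebraMap ℝ (Matrix m m ℝ) a - A)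
    rw [RingHom.mapMatrix_apply, hdet, map_zero] at this
    rw [← hmap]
    exact this.symm
  obtain ⟨v, hv, hmv⟩ := Matrix.exists_mulVec_eq_zero_iff.mpr hdetC
  refine ⟨v, hv, ?_⟩
  rw [Matrix.sub_mulVec, Algebra.algebraMap_eq_smul_one, Matrix.smul_mulVec,
    Matrix.one_mulVec, sub_eq_zero] at hmv
  exact hmv.symm

-- commuting matrices have a common eigenvector
lemma common_eigvec {m : Type*} [Fintype m] [DecidableEq m]
    (M N : Matrix m m ℂ) (hMN : M * N = N * M) (a : ℂ) (v₀ : m → ℂ)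
    (hv₀ : v₀ ≠ 0) (hMv₀ : M.mulVec v₀ = a • v₀) :
    ∃ (v : m → ℂ) (μ : ℂ), v ≠ 0 ∧ M.mulVec v = a • v ∧ N.mulVec v = μ • v := by
  set f := M.mulVecLin with hf
  set g := N.mulVecLin with hg
  set E := Module.End.eigenspace f a with hE
  have hv₀E : v₀ ∈ E := by
    rw [hE, Module.End.mem_eigenspace_iff]; exact hMv₀
  have hEnt : Nontrivial E := ⟨⟨v₀, hv₀E⟩, 0, by simp [hv₀]⟩
  have hmaps : ∀ x ∈ E, g x ∈ E := by
    intro x hx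
    rw [hE, Module.End.mem_eigenspace_iff] at hx ⊢
    have hcomm : f (g x) = g (f x) := by
      show M.mulVec (N.mulVec x) = N.mulVec (M.mulVec x)
      rw [Matrix.mulVec_mulVec, Matrix.mulVec_mulVec, hMN]
    rw [hcomm, hx, _root_.map_smul]
  set g' : Module.End ℂ E := g.restrict hmaps with hg'
  obtain ⟨μ, hμ⟩ := Module.End.exists_eigenvalue g'
  obtain ⟨w, hw⟩ := hμ.exists_hasEigenvector
  have hweq : g' w = μ • w := Module.End.mem_eigenspace_iff.mp hw.1
  refine ⟨(w : m → ℂ), μ, ?_, ?_, ?_⟩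
  · simpa using hw.2
  · exact Module.End.mem_eigenspace_iff.mp w.2
  · have : g (w : m → ℂ) = ((g' w : E) : m → ℂ) := rfl
    rw [hweq] at this
    simpa [hg] using this

-- quadratic roots with Vieta
lemma quad_roots (b μ : ℂ) :
    ∃ s₁ s₂ : ℂ, s₁ + s₂ = μ ∧ s₁ * s₂ = -b ∧
      s₁ * s₁ = μ * s₁ + b ∧ s₂ * s₂ = μ * s₂ + b := by
  obtain ⟨z, hz⟩ := IsAlgClosed.exists_pow_nat_eq (μ ^ 2 + 4 * b) (k := ℂ) two_pos
  refine ⟨(μ + z) / 2, (μ - z) / 2, by ring, ?_, ?_, ?_⟩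
  · linear_combination (-1/4 : ℂ) * hz
  · linear_combination (1/4 : ℂ) * hz
  · linear_combination (1/4 : ℂ) * hz

-- root of s^2 = μ s + b gives eigenvalue of the block matrix
lemma block_eig (n : ℕ) (B C : Matrix (Fin n) (Fin n) ℝ) (b μ s : ℂ)
    (v : Fin n → ℂ) (hv : v ≠ 0)
    (hBv : (B.map Complex.ofReal).mulVec v = b • v)
    (hCv : (C.map Complex.ofReal).mulVec v = μ • v)
    (hs : s * s = μ * s + b) :
    s ∈ spectrum ℂ (((fromBlocks 0 1 B C : Matrix (Fin n ⊕ Fin n) (Fin n ⊕ Fin n) ℝ)).map (Complex.ofReal)) := by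
  set w : Fin n ⊕ Fin n → ℂ := Sum.elim v (s • v) with hw
  have hwne : w ≠ 0 := by
    intro h
    apply hv
    funext i
    have := congrFun h (Sum.inl i)
    simpa [hw] using this
  apply spec_of_eigvec _ s w hwne
  have hmap : ((fromBlocks 0 1 B C : Matrix (Fin n ⊕ Fin n) (Fin n ⊕ Fin n) ℝ)).map (Complex.ofReal)
      = fromBlocks 0 1 (B.map Complex.ofReal) (C.map Complex.ofReal) := by
    ext (i | i) (j | j) <;>
      simp [Matrix.map_apply, Matrix.one_apply, apply_ite]
  rw [hmap, hw, Matrix.fromBlocks_mulVec]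
  funext i
  cases i with
  | inl i =>
      simp [Matrix.zero_mulVec, Matrix.one_mulVec]
  | inr i =>
      have : (C.map Complex.ofReal).mulVec (s • v) = s • (μ • v) := by
        rw [Matrix.mulVec_smul, hCv]
      simp only [Sum.elim_comp_inl, Sum.elim_comp_inr, Sum.elim_inr, hBv, this,
        Pi.add_apply, Pi.smul_apply, Matrix.zero_mulVec]
      simp only [smul_eq_mul]
      linear_combination (-(v i)) * hs

lemma vieta_bounds (n : ℕ) (B C : Matrix (Fin n) (Fin n) ℝ)
    (hstab : ∀ s ∈ spectrum ℂ (((fromBlocks 0 1 B C : Matrix (Fin n ⊕ Fin n) (Fin n ⊕ Fin n) ℝ)).map (Complex.ofReal)), s.re < 0)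
    (b μ : ℂ) (v : Fin n → ℂ) (hv : v ≠ 0)
    (hBv : (B.map Complex.ofReal).mulVec v = b • v)
    (hCv : (C.map Complex.ofReal).mulVec v = μ • v) :
    ∃ s₁ s₂ : ℂ, s₁.re < 0 ∧ s₂.re < 0 ∧ s₁ + s₂ = μ ∧ s₁ * s₂ = -b := by
  obtain ⟨s₁, s₂, hsum, hprod, h1, h2⟩ := quad_roots b μ
  exact ⟨s₁, s₂, hstab _ (block_eig n B C b μ s₁ v hv hBv hCv h1),
    hstab _ (block_eig n B C b μ s₂ v hv hBv hCv h2), hsum, hprod⟩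

/-- Necessity direction of Lemma 5: if every eigenvalue of
`[[0, I], [B, C]]` has strictly negative real part (with `B`, `C`
commuting real symmetric matrices), then all eigenvalues of `B` and
of `C` are strictly negative. -/
theorem negative_spectra_of_block_stable (n : ℕ)
    (B C : Matrix (Fin n) (Fin n) ℝ) (hB : B.IsSymm) (hC : C.IsSymm)
    (hBC : B * C = C * B)
    (hstab : ∀ s ∈ spectrum ℂ (((fromBlocks 0 1 B C : Matrix (Fin n ⊕ Fin n) (Fin n ⊕ Fin n) ℝ)).map (Complex.ofReal)), s.re < 0) :
    (∀ b ∈ spectrum ℝ B, b < 0) ∧ (∀ c ∈ spectrum ℝ C, c < 0) := by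
  have hcomm : B.map Complex.ofReal * C.map Complex.ofReal
      = C.map Complex.ofReal * B.map Complex.ofReal := by
    have h1 := Matrix.map_mul (L := B) (M := C) (f := Complex.ofRealHom)
    have h2 := Matrix.map_mul (L := C) (M := B) (f := Complex.ofRealHom)
    calc B.map Complex.ofReal * C.map Complex.ofReal = (B * C).map Complex.ofReal := h1.symm
      _ = (C * B).map Complex.ofReal := by rw [hBC]
      _ = _ := h2
  constructor
  · intro b hb
    obtain ⟨v₀, hv₀, hBv₀⟩ := eigvec_of_spec B b hb
    obtain ⟨v, μ, hv, hBv, hCv⟩ :=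
      common_eigvec (B.map Complex.ofReal) (C.map Complex.ofReal) hcomm (b : ℂ) v₀ hv₀ hBv₀
    obtain ⟨s₁, s₂, h1, h2, hsum, hprod⟩ := vieta_bounds n B C hstab (b : ℂ) μ v hv hBv hCv
    have hre := congrArg Complex.re hprod
    have him := congrArg Complex.im hprod
    simp only [Complex.mul_re, Complex.mul_im, Complex.neg_re, Complex.neg_im,
      Complex.ofReal_re, Complex.ofReal_im, neg_zero] at hre him
    have key : s₁.re ^ 2 * (s₁.re * s₂.re - s₁.im * s₂.im)
        = s₁.re * s₂.re * (s₁.re ^ 2 + s₁.im ^ 2) := by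
      linear_combination (-(s₁.re * s₁.im)) * him
    rw [hre] at key
    have hne : s₁.re ≠ 0 := ne_of_lt h1
    have hsq : 0 < s₁.re ^ 2 := by positivity
    have hpos : 0 < s₁.re * s₂.re * (s₁.re ^ 2 + s₁.im ^ 2) :=
      mul_pos (mul_pos_of_neg_of_neg h1 h2)
        (by nlinarith [sq_nonneg s₁.im])
    nlinarith [key, hpos, hsq]
  · intro c hc
    obtain ⟨v₀, hv₀, hCv₀⟩ := eigvec_of_spec C c hc
    obtain ⟨v, β, hv, hCv, hBv⟩ :=
      common_eigvec (C.map Complex.ofReal) (B.map Complex.ofReal) hcomm.symm (c : ℂ) v₀ hv₀ hCv₀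
    obtain ⟨s₁, s₂, h1, h2, hsum, hprod⟩ := vieta_bounds n B C hstab β (c : ℂ) v hv hBv hCv
    have := congrArg Complex.re hsum
    simp [Complex.add_re] at this
    linarith
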